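/- Let τ_r(α, w_1,...,w_r) = Σ_i α_i w_i^⊗d map into Sym^d(ℝ^n). If the differential of τ_r at (α, W) has rank strictly less than dim Sym^d(ℝ^n) = binom(n+d−1,d), then there exists a non-zero homogeneous polynomial P of degree d in n variables such that ∇P(w_i) = 0 for every i with α_i ≠ 0. -/

import Mathlib

open MvPolynomial Module

private lemma prodMapCount {n : ℕ} (w : Fin n → ℝ) (M : Multiset (Fin n)) :
    (M.map w).prod = ∏ x, w x ^ M.count x := by
  rw [Finset.prod_multiset_map_count]
  refine Finset.prod_subset (Finset.subset_univ _) fun x _ hx => ?_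
  rw [Multiset.count_eq_zero_of_notMem (by simpa using hx), pow_zero]

private lemma qsurj (n d : ℕ) (s : Sym (Fin n) d) :
    ∃ idx : Fin d → Fin n, (⟨Multiset.map idx Finset.univ.val, by simp⟩ : Sym (Fin n) d) = s := by
  obtain ⟨l, hl⟩ := Quotient.exists_rep s.1
  have hlen : l.length = d := by
    have := s.2
    rw [← hl] at this
    simpa using this
  refine ⟨fun k => l.get (Fin.cast hlen.symm k), Subtype.ext ?_⟩
  show Multiset.map (fun k => l.get (Fin.cast hlen.symm k)) Finset.univ.val = s.1
  rw [← hl]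
  have huniv : (Finset.univ.val : Multiset (Fin d)) = (↑(List.finRange d) : Multiset (Fin d)) := rfl
  rw [huniv, Multiset.map_coe, ← List.ofFn_eq_map]
  show (↑(List.ofFn fun k => l.get (Fin.cast hlen.symm k)) : Multiset (Fin n)) = (↑l : Multiset (Fin n))
  congr 1
  apply List.ext_get (by simp [hlen])
  intro i h1 h2
  simp [List.get_ofFn]

private lemma eraseMap {n d : ℕ} (idx : Fin d → Fin n) (m : Fin d) :
    (Multiset.map idx Finset.univ.val).erase (idx m) = Multiset.map idx (Finset.univ.val.erase m) := by
  classical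
  have h1 : (Finset.univ.val : Multiset (Fin d)) = m ::ₘ Finset.univ.val.erase m :=
    (Multiset.cons_erase (Finset.mem_univ m)).symm
  conv_lhs => rw [h1]
  rw [Multiset.map_cons, Multiset.erase_cons_head]

private lemma prodErase {n d : ℕ} (v : Fin n → ℝ) (idx : Fin d → Fin n) (m : Fin d) :
    ∏ k ∈ Finset.univ.erase m, v (idx k)
      = (((Multiset.map idx Finset.univ.val).erase (idx m)).map v).prod := by
  classical
  rw [eraseMap, Multiset.map_map, Finset.prod_eq_multiset_prod, Finset.erase_val]
  rfl

private lemma keySum {n d : ℕ} (v : Fin n → ℝ) (idx : Fin d → Fin n) (j0 : Fin n) :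
    (((Multiset.map idx Finset.univ.val).toFinsupp j0 : ℕ) : ℝ) *
      ∏ x, v x ^ (((Multiset.map idx Finset.univ.val).toFinsupp - Finsupp.single j0 1 : Fin n →₀ ℕ) x)
    = ∑ m : Fin d, (if idx m = j0 then (1:ℝ) else 0) * ∏ k ∈ Finset.univ.erase m, v (idx k) := by
  classical
  set M := Multiset.map idx Finset.univ.val with hM
  set C := ((M.erase j0).map v).prod with hC
  have hpow : ∏ x, v x ^ ((M.toFinsupp - Finsupp.single j0 1 : Fin n →₀ ℕ) x) = C := by
    rw [hC, prodMapCount]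
    refine Finset.prod_congr rfl fun x _ => ?_
    congr 1
    rw [Finsupp.tsub_apply, Multiset.toFinsupp_apply]
    rcases eq_or_ne x j0 with h | h
    · subst h; rw [Multiset.count_erase_self, Finsupp.single_eq_same]
    · rw [Multiset.count_erase_of_ne h, Finsupp.single_eq_of_ne' (Ne.symm h), Nat.sub_zero]
  rw [hpow]
  have hrhs : ∑ m : Fin d, (if idx m = j0 then (1:ℝ) else 0) * ∏ k ∈ Finset.univ.erase m, v (idx k)
      = ∑ m ∈ Finset.univ.filter (fun m => idx m = j0), ∏ k ∈ Finset.univ.erase m, v (idx k) := by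
    rw [Finset.sum_filter]
    refine Finset.sum_congr rfl fun m _ => ?_
    split <;> simp
  rw [hrhs]
  have hterm : ∀ m ∈ Finset.univ.filter (fun m => idx m = j0),
      ∏ k ∈ Finset.univ.erase m, v (idx k) = C := by
    intro m hm
    rw [Finset.mem_filter] at hm
    rw [prodErase, hm.2]
  rw [Finset.sum_congr rfl hterm, Finset.sum_const]
  have hcard : (Finset.univ.filter (fun m => idx m = j0)).card = M.toFinsupp j0 := by
    rw [Multiset.toFinsupp_apply, hM, Multiset.count_map]
    have hfil : (Multiset.filter (fun a => j0 = idx a) Finset.univ.val)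
        = (Finset.filter (fun m => idx m = j0) Finset.univ).val := by
      rw [Finset.filter_val]
      exact Multiset.filter_congr fun x _ => eq_comm
    rw [hfil]
    rfl
  rw [hcard, nsmul_eq_mul]

/-- Let `τ_r(α, w₁,…,w_r) = Σᵢ αᵢ wᵢ^⊗d` map into `Sym^d(ℝ^n)`, and let `Φ` be its
differential at `(α, w)`: `Φ(α̇, ẇ) = Σᵢ α̇ᵢ wᵢ^⊗d + Σᵢ αᵢ sym(wᵢ^⊗(d−1) ⊗ ẇᵢ)`.
If the rank of `Φ` (the dimension of the span of its range) is strictly less than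
`dim Sym^d(ℝ^n) = binom(n+d−1, d)`, then there is a non-zero homogeneous polynomial `P`
of degree `d` in `n` variables with `∇P(wᵢ) = 0` for every `i` with `αᵢ ≠ 0`. -/
theorem stmt18 (n d r : ℕ) (α : Fin r → ℝ) (w : Fin r → Fin n → ℝ)
    (Φ : (Fin r → ℝ) × (Fin r → Fin n → ℝ) → ((Fin d → Fin n) → ℝ))
    (hΦ : ∀ da dw, Φ (da, dw) = fun idx =>
        (∑ i, da i * ∏ k, w i (idx k)) +
        ∑ i, α i * ∑ m : Fin d, dw i (idx m) * ∏ k ∈ Finset.univ.erase m, w i (idx k))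
    (hrank : Module.finrank ℝ (Submodule.span ℝ (Set.range Φ)) < (n + d - 1).choose d) :
    ∃ P : MvPolynomial (Fin n) ℝ, P ≠ 0 ∧ P.IsHomogeneous d ∧
      ∀ i, α i ≠ 0 → ∀ j, MvPolynomial.eval (w i) (MvPolynomial.pderiv j P) = 0 := by
  classical
  set E := EuclideanSpace ℝ (Fin d → Fin n) with hE
  set e : E ≃ₗ[ℝ] ((Fin d → Fin n) → ℝ) := WithLp.linearEquiv 2 ℝ _ with he
  set q : (Fin d → Fin n) → Sym (Fin n) d :=
    fun idx => ⟨Multiset.map idx Finset.univ.val, by simp⟩ with hq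
  set L : (Sym (Fin n) d → ℝ) →ₗ[ℝ] E :=
    e.symm.toLinearMap ∘ₗ LinearMap.funLeft ℝ ℝ q with hL
  set S : Submodule ℝ E := LinearMap.range L with hS
  set V : Submodule ℝ E := Submodule.span ℝ (Set.range (fun p => e.symm (Φ p))) with hV
  -- rank of S
  have hLinj : Function.Injective L := by
    rw [hL, LinearMap.coe_comp]
    exact (LinearEquiv.injective _).comp
      (LinearMap.funLeft_injective_of_surjective ℝ ℝ q (fun s => qsurj n d s))
  have hSrank : Module.finrank ℝ S = (n + d - 1).choose d := by
    rw [hS, LinearMap.finrank_range_of_inj hLinj, Module.finrank_fintype_fun_eq_card,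
      Sym.card_sym_eq_choose, Fintype.card_fin]
  -- rank of V
  have hVrank : Module.finrank ℝ V < (n + d - 1).choose d := by
    have hmap : V = (Submodule.span ℝ (Set.range Φ)).map (e.symm : _ →ₗ[ℝ] _) := by
      rw [hV, Submodule.map_span]
      congr 1
      rw [← Set.range_comp]
      rfl
    rw [hmap, LinearEquiv.finrank_map_eq]
    exact hrank
  -- V ≤ S
  have hVS : V ≤ S := by
    rw [hV, Submodule.span_le]
    rintro x ⟨p, rfl⟩
    refine ⟨fun s => (∑ i, p.1 i * ((s.1.map (w i)).prod)) +
      ∑ i, α i * ((s.1.map (fun x => p.2 i x * ((s.1.erase x).map (w i)).prod)).sum), ?_⟩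
    apply congrArg e.symm
    show LinearMap.funLeft ℝ ℝ q _ = Φ p
    have hp : Φ p = Φ (p.1, p.2) := rfl
    rw [hp, hΦ p.1 p.2]
    funext idx
    show (∑ i, p.1 i * (((q idx).1.map (w i)).prod)) +
        ∑ i, α i * (((q idx).1.map (fun x => p.2 i x * (((q idx).1.erase x).map (w i)).prod)).sum)
      = _
    congr 1
    · refine Finset.sum_congr rfl fun i _ => ?_
      congr 1
      show ((Multiset.map idx Finset.univ.val).map (w i)).prod = _
      rw [Multiset.map_map, Finset.prod_eq_multiset_prod]
      rfl
    · refine Finset.sum_congr rfl fun i _ => ?_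
      congr 1
      show ((Multiset.map idx Finset.univ.val).map
        (fun x => p.2 i x * (((Multiset.map idx Finset.univ.val).erase x).map (w i)).prod)).sum = _
      rw [Multiset.map_map, Finset.sum_eq_multiset_sum]
      apply congrArg
      apply Multiset.map_congr rfl
      intro m hm
      show p.2 i (idx m) * _ = p.2 i (idx m) * _
      congr 1
      rw [prodErase]
  -- find T
  have hpos : 0 < Module.finrank ℝ ↥(Vᗮ ⊓ S) := by
    have h1 := Submodule.finrank_sup_add_finrank_inf_eq Vᗮ S
    have h2 := Submodule.finrank_add_finrank_orthogonal V
    have h3 : Module.finrank ℝ ↥(Vᗮ ⊔ S) ≤ Module.finrank ℝ E := Submodule.finrank_le _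
    have h4 : Module.finrank ℝ V < Module.finrank ℝ S := by rw [hSrank]; exact hVrank
    omega
  have hne : (Vᗮ ⊓ S) ≠ ⊥ := by
    intro h
    rw [h, finrank_bot] at hpos
    exact lt_irrefl 0 hpos
  obtain ⟨T, hTmem, hT0⟩ := Submodule.exists_mem_ne_zero_of_ne_bot hne
  obtain ⟨hTV, hTS⟩ := Submodule.mem_inf.mp hTmem
  obtain ⟨g, hg⟩ := hTS
  have hTval : ∀ idx, T idx = g (q idx) := by
    intro idx
    rw [← hg]
    rfl
  -- the polynomial
  set u : (Fin d → Fin n) → (Fin n →₀ ℕ) :=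
    fun idx => (Multiset.map idx Finset.univ.val).toFinsupp with hu
  set P : MvPolynomial (Fin n) ℝ :=
    ∑ idx : Fin d → Fin n, MvPolynomial.monomial (u idx) (T idx) with hP
  have hudeg : ∀ idx, (u idx).degree = d := by
    intro idx
    have h := Multiset.toFinsupp_sum_eq (Multiset.map idx Finset.univ.val)
    simp only [Finsupp.sum] at h
    simp only [Finsupp.degree_apply, hu]
    simpa using h
  -- nonzero
  have hPne : P ≠ 0 := by
    have : ∃ idx, T idx ≠ 0 := by
      by_contra hc
      push_neg at hc
      exact hT0 (PiLp.ext fun idx => hc idx)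
    obtain ⟨idx0, hidx0⟩ := this
    intro hzero
    have hco : MvPolynomial.coeff (u idx0) P = 0 := by rw [hzero]; simp
    rw [hP, MvPolynomial.coeff_sum] at hco
    have hco2 : ∀ idx : Fin d → Fin n,
        MvPolynomial.coeff (u idx0) (MvPolynomial.monomial (u idx) (T idx))
          = if u idx = u idx0 then T idx0 else 0 := by
      intro idx
      rw [MvPolynomial.coeff_monomial]
      split
      · next h =>
        have hq' : q idx = q idx0 := Subtype.ext (Multiset.toFinsupp.injective h)
        rw [hTval, hTval, hq']
      · rfl
    rw [Finset.sum_congr rfl (fun idx _ => hco2 idx), ← Finset.sum_filter,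
      Finset.sum_const, nsmul_eq_mul] at hco
    rcases mul_eq_zero.mp hco with h | h
    · have hmem0 : idx0 ∈ Finset.univ.filter (fun idx => u idx = u idx0) := by
        simp
      have : (Finset.univ.filter (fun idx => u idx = u idx0)).card ≠ 0 :=
        Finset.card_ne_zero_of_mem hmem0
      exact this (Nat.cast_eq_zero.mp h)
    · exact hidx0 h
  refine ⟨P, hPne, ?_, ?_⟩
  · rw [hP]
    exact MvPolynomial.IsHomogeneous.sum _ _ _
      (fun idx _ => MvPolynomial.isHomogeneous_monomial _ (hudeg idx))
  · intro i0 hα j0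
    -- choose direction dw
    set dw : Fin r → Fin n → ℝ :=
      fun i x => if i = i0 then (if x = j0 then 1 else 0) else 0 with hdw
    have hmem : e.symm (Φ (0, dw)) ∈ V := Submodule.subset_span ⟨(0, dw), rfl⟩
    have horth : (inner ℝ (e.symm (Φ (0, dw))) T : ℝ) = 0 :=
      (Submodule.mem_orthogonal V T).mp hTV _ hmem
    have hsum : ∑ idx : Fin d → Fin n, Φ (0, dw) idx * T idx = 0 := by
      rw [← horth]
      rw [PiLp.inner_apply]
      refine Finset.sum_congr rfl fun idx _ => ?_
      rw [RCLike.inner_apply, starRingEnd_apply]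
      exact mul_comm _ _
    have hval : ∀ idx, Φ (0, dw) idx
        = α i0 * ∑ m : Fin d, (if idx m = j0 then (1:ℝ) else 0) *
            ∏ k ∈ Finset.univ.erase m, w i0 (idx k) := by
      intro idx
      rw [hΦ 0 dw]
      simp only [Pi.zero_apply, zero_mul, Finset.sum_const_zero, zero_add]
      rw [Finset.sum_eq_single i0]
      · simp [hdw]
      · intro i _ hi
        rw [hdw]
        simp [hi]
      · intro h
        exact absurd (Finset.mem_univ i0) h
    have hsum2 : ∑ idx : Fin d → Fin n,
        T idx * ∑ m : Fin d, (if idx m = j0 then (1:ℝ) else 0) *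
          ∏ k ∈ Finset.univ.erase m, w i0 (idx k) = 0 := by
      have hexp : ∑ idx : Fin d → Fin n, Φ (0, dw) idx * T idx
          = α i0 * ∑ idx : Fin d → Fin n,
            T idx * ∑ m : Fin d, (if idx m = j0 then (1:ℝ) else 0) *
              ∏ k ∈ Finset.univ.erase m, w i0 (idx k) := by
        rw [Finset.mul_sum]
        refine Finset.sum_congr rfl fun idx _ => ?_
        rw [hval idx]
        ring
      have hzero := hexp.symm.trans hsum
      exact (mul_eq_zero.mp hzero).resolve_left hα
    rw [hP, map_sum, map_sum]
    rw [← hsum2]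
    refine Finset.sum_congr rfl fun idx _ => ?_
    rw [MvPolynomial.pderiv_monomial, MvPolynomial.eval_monomial]
    rw [Finsupp.prod_fintype _ _ (fun x => pow_zero _)]
    simp only [hu]
    rw [mul_assoc, keySum (w i0) idx j0]
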